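/- Let T be a tree and let P be a path in T with endpoints u and v. Let T_1 (respectively T_2) be the connected component containing u (respectively v) of the graph obtained from T by removing the internal vertices of P (i.e. removing P ∖ {u, v}), and let T' be the graph obtained from the disjoint union of T_1 and T_2 by adding the edge uv. If b(T') = p and d_T(u,v) + 2·max{ d_T(x, P) : x ∈ V(T), x ∉ V(T_1) ∪ V(T_2) } ≤ 2p + 2 (where d_T(x, P) is the minimum distance in T from x to a vertex of P), then b(T) ≤ p + 1. -/

import Mathlib

open SimpleGraph

/-- A graph is `k`-burnable if there is a sequence of `k` vertices `v 0, …, v (k-1)`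
(`v i` being set on fire at step `i+1`) whose closed balls of radii `k-1-i` cover the graph. -/
def Burnable {V : Type*} (G : SimpleGraph V) (k : ℕ) : Prop :=
  ∃ v : Fin k → V, ∀ u : V, ∃ i : Fin k,
    G.Reachable (v i) u ∧ G.dist (v i) u ≤ k - 1 - (i : ℕ)

/-- The burning number of a graph: the least `k` such that `G` is `k`-burnable. -/
noncomputable def burningNumber {V : Type*} (G : SimpleGraph V) : ℕ :=
  sInf {k | Burnable G k}
/-- The graph obtained from `T` by deleting the vertices in `I`
(vertices of `I` become isolated). -/
def deleteVerts {V : Type*} (T : SimpleGraph V) (I : Set V) : SimpleGraph V :=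
  SimpleGraph.fromRel (fun a b => T.Adj a b ∧ a ∉ I ∧ b ∉ I)

-- A. generic helpers

lemma burningNumber_le_of_burnable {V : Type*} {G : SimpleGraph V} {k : ℕ}
    (h : Burnable G k) : burningNumber G ≤ k := Nat.sInf_le h

/-- in an acyclic connected graph, every path realizes the distance -/
lemma path_length_eq_dist {V : Type*} {T : SimpleGraph V} (hconn : T.Connected)
    (hacyc : T.IsAcyclic) {a b : V} (Q : T.Walk a b) (hQ : Q.IsPath) :
    Q.length = T.dist a b := by
  classical
  obtain ⟨W, hW⟩ := hconn.exists_walk_length_eq_dist a b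
  have h1 : (⟨Q, hQ⟩ : T.Path a b) = ⟨W.bypass, W.bypass_isPath⟩ :=
    hacyc.path_unique _ _
  have h2 : Q = W.bypass := congrArg Subtype.val h1
  have h3 : Q.length = W.bypass.length := by rw [h2]
  have := T.dist_le Q
  have := W.length_bypass_le
  omega

lemma dist_getVert_le {V : Type*} {T : SimpleGraph V} (hconn : T.Connected)
    {a b : V} (W : T.Walk a b) (i j : ℕ) (hij : i ≤ j) :
    T.dist (W.getVert i) (W.getVert j) ≤ j - i := by
  induction j, hij using Nat.le_induction with
  | base => rw [Nat.sub_self, Nat.le_zero, SimpleGraph.dist_self]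
  | succ n hn ih =>
    have step : T.dist (W.getVert n) (W.getVert (n+1)) ≤ 1 := by
      by_cases h : n < W.length
      · have hadj := W.adj_getVert_succ h
        have hle : T.dist (W.getVert n) (W.getVert (n+1)) ≤ (Walk.cons hadj .nil).length :=
          T.dist_le _
        rw [Walk.length_cons, Walk.length_nil] at hle
        exact hle
      · push_neg at h
        rw [W.getVert_of_length_le h, W.getVert_of_length_le (by omega : W.length ≤ n + 1)]
        rw [SimpleGraph.dist_self]
        omega
    have tri := hconn.dist_triangle (u := W.getVert i) (v := W.getVert n)
      (w := W.getVert (n+1))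
    omega

section B
variable {V : Type*} {T : SimpleGraph V} {I S : Set V}

lemma deleteVerts_le : deleteVerts T I ≤ T := by
  intro a b h
  rw [deleteVerts, fromRel_adj] at h
  rcases h.2 with ⟨h,_⟩|⟨h,_⟩
  · exact h
  · exact h.symm

lemma deleteVerts_adj {a b : V} (h : (deleteVerts T I).Adj a b) :
    a ≠ b ∧ T.Adj a b ∧ a ∉ I ∧ b ∉ I := by
  rw [deleteVerts, fromRel_adj] at h
  obtain ⟨hne, h⟩ := h
  rcases h with ⟨h1,h2,h3⟩|⟨h1,h2,h3⟩
  · exact ⟨hne, h1, h2, h3⟩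
  · exact ⟨hne, h1.symm, h3, h2⟩

lemma deleteVerts_adj_mk {a b : V} (h : T.Adj a b) (ha : a ∉ I) (hb : b ∉ I) :
    (deleteVerts T I).Adj a b := by
  rw [deleteVerts, fromRel_adj]
  exact ⟨h.ne, Or.inl ⟨h, ha, hb⟩⟩

lemma walk_support_not_mem {a b : V} (W : (deleteVerts T I).Walk a b) (ha : a ∉ I) :
    ∀ w ∈ W.support, w ∉ I := by
  induction W with
  | nil => intro w hw; rw [Walk.support_nil, List.mem_singleton] at hw; exact hw ▸ ha
  | @cons x y z h W ih =>
    intro w hw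
    rw [Walk.support_cons, List.mem_cons] at hw
    rcases hw with rfl | hw
    · exact ha
    · exact ih (deleteVerts_adj h).2.2.2 w hw

/-- a vertex of `S` is not in `I` -/
lemma mem_S_not_mem_I {u v : V}
    (hSiff : ∀ x, x ∈ S ↔ ((deleteVerts T I).Reachable u x ∨ (deleteVerts T I).Reachable v x))
    (huI : u ∉ I) (hvI : v ∉ I) {x : V} (hx : x ∈ S) : x ∉ I := by
  rcases (hSiff x).1 hx with h | h
  · obtain ⟨W⟩ := h
    exact walk_support_not_mem W huI x W.end_mem_support
  · obtain ⟨W⟩ := h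
    exact walk_support_not_mem W hvI x W.end_mem_support

lemma mem_S_of_reachable {u v : V}
    (hSiff : ∀ x, x ∈ S ↔ ((deleteVerts T I).Reachable u x ∨ (deleteVerts T I).Reachable v x))
    {a b : V} (ha : a ∈ S) (h : (deleteVerts T I).Reachable a b) : b ∈ S := by
  rcases (hSiff a).1 ha with h' | h'
  · exact (hSiff b).2 (Or.inl (h'.trans h))
  · exact (hSiff b).2 (Or.inr (h'.trans h))

/-- lift a walk of `T ∖ I` between vertices of `S` to `T'` -/
lemma lift_walk {u v : V} {T' : SimpleGraph S}
    (hSiff : ∀ x, x ∈ S ↔ ((deleteVerts T I).Reachable u x ∨ (deleteVerts T I).Reachable v x))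
    (hAiff : ∀ a b : S, T'.Adj a b ↔
      (a ≠ b ∧ (T.Adj a.1 b.1 ∨ (a.1 = u ∧ b.1 = v) ∨ (a.1 = v ∧ b.1 = u))))
    {a b : V} (W : (deleteVerts T I).Walk a b) (ha : a ∈ S) (hb : b ∈ S) :
    ∃ W' : T'.Walk ⟨a, ha⟩ ⟨b, hb⟩, W'.length = W.length := by
  induction W with
  | nil => exact ⟨Walk.nil, rfl⟩
  | @cons x y z h W ih =>
    have hy : y ∈ S := mem_S_of_reachable hSiff ha ⟨Walk.cons h Walk.nil⟩
    obtain ⟨W', hW'⟩ := ih hy hb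
    have hadj : T'.Adj ⟨x, ha⟩ ⟨y, hy⟩ := by
      rw [hAiff]
      refine ⟨?_, Or.inl (deleteVerts_adj h).2.1⟩
      intro hxy
      exact (deleteVerts_adj h).1 (congrArg Subtype.val hxy)
    exact ⟨Walk.cons hadj W', by simp [Walk.length_cons, hW']⟩

lemma getVert_one_ne {a b : V} (P : T.Walk a b) (hP : P.IsPath) (hd : 2 ≤ P.length) :
    P.getVert 1 ≠ a ∧ P.getVert 1 ≠ b := by
  cases P with
  | nil => simp at hd
  | @cons _ w _ h q =>
    rw [Walk.getVert_cons_succ, Walk.getVert_zero]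
    rw [Walk.cons_isPath_iff] at hP
    constructor
    · intro hwa; exact hP.2 (hwa ▸ q.start_mem_support)
    · intro hwb
      subst hwb
      have hq := Walk.isPath_iff_eq_nil.1 hP.1
      rw [hq] at hd
      simp at hd

/-- the unique `T`-path between `u` and a vertex of its side realizes the distance and
lifts to `T'` -/
lemma key1 {u v : V} {T' : SimpleGraph S}
    (hconn : T.Connected) (hacyc : T.IsAcyclic)
    (hSiff : ∀ x, x ∈ S ↔ ((deleteVerts T I).Reachable u x ∨ (deleteVerts T I).Reachable v x))
    (hAiff : ∀ a b : S, T'.Adj a b ↔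
      (a ≠ b ∧ (T.Adj a.1 b.1 ∨ (a.1 = u ∧ b.1 = v) ∨ (a.1 = v ∧ b.1 = u))))
    {x : V} (hx : (deleteVerts T I).Reachable u x) (huS : u ∈ S) (hxS : x ∈ S) :
    T'.Reachable ⟨u, huS⟩ ⟨x, hxS⟩ ∧ T'.dist ⟨u, huS⟩ ⟨x, hxS⟩ ≤ T.dist u x := by
  classical
  obtain ⟨W⟩ := hx
  have hbp : W.bypass.IsPath := W.bypass_isPath
  -- map to T
  have hmQ : (W.bypass.mapLe (deleteVerts_le (I := I))).IsPath := hbp.mapLe _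
  have hlen : (W.bypass.mapLe (deleteVerts_le (I := I))).length = T.dist u x :=
    path_length_eq_dist hconn hacyc _ hmQ
  have hlen2 : W.bypass.length = T.dist u x := by
    rw [← hlen]; simp [Walk.mapLe, Walk.length_map]
  obtain ⟨W', hW'⟩ := lift_walk (T' := T') hSiff hAiff W.bypass huS hxS
  constructor
  · exact ⟨W'⟩
  · calc T'.dist _ _ ≤ W'.length := T'.dist_le W'
    _ = T.dist u x := by rw [hW', hlen2]

/-- there is no `T`-edge between the two sides (when the sides are disjoint) -/
lemma noedge {u v : V}
    (hSiff : ∀ x, x ∈ S ↔ ((deleteVerts T I).Reachable u x ∨ (deleteVerts T I).Reachable v x))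
    (huI : u ∉ I) (hvI : v ∉ I)
    (hdisj : ∀ z, (deleteVerts T I).Reachable u z → (deleteVerts T I).Reachable v z → False)
    {x y : V} (hx : (deleteVerts T I).Reachable u x) (hy : (deleteVerts T I).Reachable v y)
    (hadj : T.Adj x y) : False := by
  have hxS : x ∈ S := (hSiff x).2 (Or.inl hx)
  have hyS : y ∈ S := (hSiff y).2 (Or.inr hy)
  have hxI := mem_S_not_mem_I hSiff huI hvI hxS
  have hyI := mem_S_not_mem_I hSiff huI hvI hyS
  have : (deleteVerts T I).Adj x y := deleteVerts_adj_mk hadj hxI hyI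
  exact hdisj y (hx.trans ⟨Walk.cons this Walk.nil⟩) hy

/-- classification of `T'`-edges -/
lemma edge_class {u v : V} {T' : SimpleGraph S}
    (hSiff : ∀ x, x ∈ S ↔ ((deleteVerts T I).Reachable u x ∨ (deleteVerts T I).Reachable v x))
    (hAiff : ∀ a b : S, T'.Adj a b ↔
      (a ≠ b ∧ (T.Adj a.1 b.1 ∨ (a.1 = u ∧ b.1 = v) ∨ (a.1 = v ∧ b.1 = u))))
    (huI : u ∉ I) (hvI : v ∉ I)
    (hdisj : ∀ z, (deleteVerts T I).Reachable u z → (deleteVerts T I).Reachable v z → False)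
    {A B : S} (hAB : T'.Adj A B) :
    ((deleteVerts T I).Reachable u A.1 ∧ (deleteVerts T I).Reachable u B.1 ∧ T.Adj A.1 B.1) ∨
    ((deleteVerts T I).Reachable v A.1 ∧ (deleteVerts T I).Reachable v B.1 ∧ T.Adj A.1 B.1) ∨
    (A.1 = u ∧ B.1 = v) ∨ (A.1 = v ∧ B.1 = u) := by
  rw [hAiff] at hAB
  rcases hAB.2 with h | h | h
  · rcases (hSiff A.1).1 A.2 with hA | hA
    · rcases (hSiff B.1).1 B.2 with hB | hB
      · exact Or.inl ⟨hA, hB, h⟩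
      · exact absurd (noedge hSiff huI hvI hdisj hA hB h) id
    · rcases (hSiff B.1).1 B.2 with hB | hB
      · exact absurd (noedge hSiff huI hvI hdisj hB hA h.symm) id
      · exact Or.inr (Or.inl ⟨hA, hB, h⟩)
  · exact Or.inr (Or.inr (Or.inl h))
  · exact Or.inr (Or.inr (Or.inr h))

open Classical in
/-- potential function for lower bounds on `T'`-distances -/
noncomputable def psi {V : Type*} (T : SimpleGraph V) (I S : Set V) (u v : V)
    (x₀ : S) (z : S) : ℕ :=
  if (deleteVerts T I).Reachable u z.1 then T.dist x₀.1 z.1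
  else T.dist x₀.1 u + 1 + T.dist v z.1

lemma psi_edge {u v : V} {T' : SimpleGraph S}
    (hconn : T.Connected)
    (hSiff : ∀ x, x ∈ S ↔ ((deleteVerts T I).Reachable u x ∨ (deleteVerts T I).Reachable v x))
    (hAiff : ∀ a b : S, T'.Adj a b ↔
      (a ≠ b ∧ (T.Adj a.1 b.1 ∨ (a.1 = u ∧ b.1 = v) ∨ (a.1 = v ∧ b.1 = u))))
    (huI : u ∉ I) (hvI : v ∉ I)
    (hdisj : ∀ z, (deleteVerts T I).Reachable u z → (deleteVerts T I).Reachable v z → False)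
    (x₀ : S) {A B : S} (hAB : T'.Adj A B) :
    psi T I S u v x₀ B ≤ psi T I S u v x₀ A + 1 := by
  have hd1 : ∀ a b : V, T.Adj a b → T.dist a b ≤ 1 := by
    intro a b h
    have := T.dist_le (Walk.cons h Walk.nil)
    simpa using this
  rcases edge_class hSiff hAiff huI hvI hdisj hAB with ⟨hA, hB, hadj⟩ | ⟨hA, hB, hadj⟩ |
    ⟨hA, hB⟩ | ⟨hA, hB⟩
  · rw [psi, psi, if_pos hA, if_pos hB]
    have := hconn.dist_triangle (u := x₀.1) (v := A.1) (w := B.1)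
    have := hd1 _ _ hadj
    omega
  · rw [psi, psi, if_neg (fun h => hdisj A.1 h hA), if_neg (fun h => hdisj B.1 h hB)]
    have := hconn.dist_triangle (u := v) (v := A.1) (w := B.1)
    have := hd1 _ _ hadj
    omega
  · have hsA : (deleteVerts T I).Reachable u A.1 := by rw [hA]
    have hsB : ¬ (deleteVerts T I).Reachable u B.1 :=
      fun h => hdisj B.1 h (by rw [hB])
    rw [psi, psi, if_pos hsA, if_neg hsB, hA, hB, SimpleGraph.dist_self]
  · have hsA : ¬ (deleteVerts T I).Reachable u A.1 :=
      fun h => hdisj A.1 h (by rw [hA])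
    have hsB : (deleteVerts T I).Reachable u B.1 := by rw [hB]
    rw [psi, psi, if_neg hsA, if_pos hsB, hA, hB, SimpleGraph.dist_self]
    have := hconn.dist_triangle (u := x₀.1) (v := v) (w := u)
    omega

lemma psi_walk {u v : V} {T' : SimpleGraph S}
    (hconn : T.Connected)
    (hSiff : ∀ x, x ∈ S ↔ ((deleteVerts T I).Reachable u x ∨ (deleteVerts T I).Reachable v x))
    (hAiff : ∀ a b : S, T'.Adj a b ↔
      (a ≠ b ∧ (T.Adj a.1 b.1 ∨ (a.1 = u ∧ b.1 = v) ∨ (a.1 = v ∧ b.1 = u))))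
    (huI : u ∉ I) (hvI : v ∉ I)
    (hdisj : ∀ z, (deleteVerts T I).Reachable u z → (deleteVerts T I).Reachable v z → False)
    (x₀ : S) {A B : S} (W : T'.Walk A B) :
    psi T I S u v x₀ B ≤ psi T I S u v x₀ A + W.length := by
  induction W with
  | nil => simp
  | @cons a b c h W ih =>
    have := psi_edge hconn hSiff hAiff huI hvI hdisj x₀ h
    rw [Walk.length_cons]
    omega

lemma psi_lower_same {u v : V} {T' : SimpleGraph S}
    (hconn : T.Connected)
    (hSiff : ∀ x, x ∈ S ↔ ((deleteVerts T I).Reachable u x ∨ (deleteVerts T I).Reachable v x))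
    (hAiff : ∀ a b : S, T'.Adj a b ↔
      (a ≠ b ∧ (T.Adj a.1 b.1 ∨ (a.1 = u ∧ b.1 = v) ∨ (a.1 = v ∧ b.1 = u))))
    (huI : u ∉ I) (hvI : v ∉ I)
    (hdisj : ∀ z, (deleteVerts T I).Reachable u z → (deleteVerts T I).Reachable v z → False)
    {x₀ B : S} (h₀ : (deleteVerts T I).Reachable u x₀.1)
    (hB : (deleteVerts T I).Reachable u B.1) (hr : T'.Reachable x₀ B) :
    T.dist x₀.1 B.1 ≤ T'.dist x₀ B := by
  obtain ⟨W, hW⟩ := hr.exists_walk_length_eq_dist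
  have := psi_walk hconn hSiff hAiff huI hvI hdisj x₀ W
  rw [psi, psi, if_pos hB, if_pos h₀, SimpleGraph.dist_self, hW] at this
  omega

lemma psi_lower_cross {u v : V} {T' : SimpleGraph S}
    (hconn : T.Connected)
    (hSiff : ∀ x, x ∈ S ↔ ((deleteVerts T I).Reachable u x ∨ (deleteVerts T I).Reachable v x))
    (hAiff : ∀ a b : S, T'.Adj a b ↔
      (a ≠ b ∧ (T.Adj a.1 b.1 ∨ (a.1 = u ∧ b.1 = v) ∨ (a.1 = v ∧ b.1 = u))))
    (huI : u ∉ I) (hvI : v ∉ I)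
    (hdisj : ∀ z, (deleteVerts T I).Reachable u z → (deleteVerts T I).Reachable v z → False)
    {x₀ B : S} (h₀ : (deleteVerts T I).Reachable u x₀.1)
    (hB : (deleteVerts T I).Reachable v B.1) (hr : T'.Reachable x₀ B) :
    T.dist x₀.1 u + 1 + T.dist v B.1 ≤ T'.dist x₀ B := by
  obtain ⟨W, hW⟩ := hr.exists_walk_length_eq_dist
  have := psi_walk hconn hSiff hAiff huI hvI hdisj x₀ W
  rw [psi, psi, if_neg (fun h => hdisj B.1 h hB), if_pos h₀, SimpleGraph.dist_self, hW] at this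
  omega
end B

section C
variable {V : Type*}

lemma main_construct (T : SimpleGraph V) (hconn : T.Connected) (hacyc : T.IsAcyclic)
    (u v : V) (P : T.Walk u v) (hP : P.IsPath) (hd : 2 ≤ P.length)
    (I S : Set V)
    (hSiff : ∀ x, x ∈ S ↔ ((deleteVerts T I).Reachable u x ∨ (deleteVerts T I).Reachable v x))
    (huI : u ∉ I) (hvI : v ∉ I)
    (hdisj : ∀ z, (deleteVerts T I).Reachable u z → (deleteVerts T I).Reachable v z → False)
    (T' : SimpleGraph S)
    (hAiff : ∀ a b : S, T'.Adj a b ↔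
      (a ≠ b ∧ (T.Adj a.1 b.1 ∨ (a.1 = u ∧ b.1 = v) ∨ (a.1 = v ∧ b.1 = u))))
    (p : ℕ) (σ : Fin p → S)
    (hσ : ∀ x : S, ∃ j : Fin p, T'.Reachable (σ j) x ∧ T'.dist (σ j) x ≤ p - 1 - (j:ℕ))
    (hgood : ∀ x : S, (deleteVerts T I).Reachable v x.1 →
       ∃ j : Fin p, (deleteVerts T I).Reachable v (σ j).1 ∧ T'.Reachable (σ j) x ∧
         T'.dist (σ j) x ≤ p - 1 - (j:ℕ))
    (M : ℕ)
    (hM : ∀ x ∉ S, ∃ φ : ℕ, 1 ≤ φ ∧ φ + 1 ≤ P.length ∧ T.dist x (P.getVert φ) ≤ M)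
    (hcond : P.length + 2*M ≤ 2*p + 2) :
    Burnable T (p+1) := by
  classical
  -- swapped-side hypotheses
  have hSiff' : ∀ x, x ∈ S ↔
      ((deleteVerts T I).Reachable v x ∨ (deleteVerts T I).Reachable u x) :=
    fun x => (hSiff x).trans or_comm
  have hAiff' : ∀ a b : S, T'.Adj a b ↔
      (a ≠ b ∧ (T.Adj a.1 b.1 ∨ (a.1 = v ∧ b.1 = u) ∨ (a.1 = u ∧ b.1 = v))) := by
    intro a b; rw [hAiff]; tauto
  have hdisj' : ∀ z, (deleteVerts T I).Reachable v z →
      (deleteVerts T I).Reachable u z → False := fun z h1 h2 => hdisj z h2 h1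
  set d := P.length with hdd
  -- covered by a u-side source
  set Cov : S → Prop := fun x => ∃ j : Fin p, (deleteVerts T I).Reachable u (σ j).1 ∧
    T'.Reachable (σ j) x ∧ T'.dist (σ j) x ≤ p - 1 - (j:ℕ) with hCov
  set E : Set ℕ := {m : ℕ | ∃ x : S, (deleteVerts T I).Reachable u x.1 ∧ ¬ Cov x ∧
    m = T.dist u x.1 + 1} with hE
  -- every element of E is at most p, and comes with a deep v-side source
  have hEbound : ∀ m ∈ E, ∃ j : Fin p, (deleteVerts T I).Reachable v (σ j).1 ∧
      m + T.dist v (σ j).1 ≤ p - 1 - (j:ℕ) := by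
    intro m hm
    obtain ⟨x, hxu, hxcov, rfl⟩ := hm
    obtain ⟨j, hjr, hjd⟩ := hσ x
    have hside : (deleteVerts T I).Reachable v (σ j).1 := by
      rcases (hSiff (σ j).1).1 (σ j).2 with h | h
      · exact absurd ⟨j, h, hjr, hjd⟩ hxcov
      · exact h
    refine ⟨j, hside, ?_⟩
    have hlow := psi_lower_cross hconn hSiff hAiff huI hvI hdisj hxu hside hjr.symm
    have hcomm : T'.dist x (σ j) = T'.dist (σ j) x := SimpleGraph.dist_comm
    have hux : T.dist x.1 u = T.dist u x.1 := SimpleGraph.dist_comm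
    omega
  have hEle : ∀ m ∈ E, m ≤ p := by
    intro m hm
    obtain ⟨j, _, hj⟩ := hEbound m hm
    omega
  have hbddE : BddAbove E := ⟨p, fun m hm => hEle m hm⟩
  set ε : ℕ := sSup E with hε
  have hεp : ε ≤ p := by
    rcases Set.eq_empty_or_nonempty E with h | h
    · rw [hε, h, csSup_empty]; exact bot_le
    · exact csSup_le h hEle
  have hMp : M ≤ p := by omega
  set g : ℕ := max ε M with hg
  have hg1 : ε ≤ g := le_max_left _ _
  have hg2 : M ≤ g := le_max_right _ _
  have hg5 : g = ε ∨ g = M := by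
    rcases max_choice ε M with h | h
    · exact Or.inl (by rw [hg, h])
    · exact Or.inr (by rw [hg, h])
  have hgp : g ≤ p := by rcases hg5 with h | h <;> omega
  set a : ℕ := min d (p + 1 - g) with ha
  have ha1 : a ≤ d := min_le_left _ _
  have ha2 : a + g ≤ p + 1 := by
    rcases min_choice d (p + 1 - g) with h | h
    · rw [ha, h]
      rcases le_total d (p + 1 - g) with h2 | h2 <;> omega
    · rw [ha, h]; omega
  have ha4 : a = d ∨ a + g = p + 1 := by
    rcases min_choice d (p + 1 - g) with h | h
    · exact Or.inl (by rw [ha, h])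
    · right; rw [ha, h]; omega
  set c : V := P.getVert a with hc
  -- distances along P
  have hPdist : ∀ i j : ℕ, i ≤ j → T.dist (P.getVert i) (P.getVert j) ≤ j - i :=
    fun i j hij => dist_getVert_le hconn P i j hij
  have hcu : T.dist c u ≤ a := by
    have := hPdist 0 a (by omega)
    rw [P.getVert_zero] at this
    rw [SimpleGraph.dist_comm]
    exact this
  have hcv : ∀ φ : ℕ, φ ≤ d → T.dist (P.getVert φ) v ≤ d - φ := by
    intro φ hφ
    have := hPdist φ d hφ
    rwa [P.getVert_length] at this
  -- the burning sources
  refine ⟨Fin.cases c (fun j => (σ j).1), fun x => ?_⟩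
  by_cases hxS : x ∈ S
  · rcases (hSiff x).1 hxS with hRu | hRv
    · by_cases hcov : Cov ⟨x, hxS⟩
      · obtain ⟨j, hju, hjr, hjd⟩ := hcov
        refine ⟨j.succ, hconn.preconnected _ _, ?_⟩
        have hlow := psi_lower_same hconn hSiff hAiff huI hvI hdisj hju hRu hjr
        have hxx : ((⟨x, hxS⟩ : S) : V) = x := rfl
        rw [hxx] at hlow
        simp only [Fin.cases_succ]
        have hjv : (j.succ : ℕ) = (j : ℕ) + 1 := rfl
        have hjp := j.isLt
        rw [hjv]
        omega
      · have hmE : T.dist u x + 1 ∈ E := ⟨⟨x, hxS⟩, hRu, hcov, rfl⟩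
        have hmle : T.dist u x + 1 ≤ ε := le_csSup hbddE hmE
        refine ⟨0, hconn.preconnected _ _, ?_⟩
        simp only [Fin.cases_zero]
        have htri := hconn.dist_triangle (u := c) (v := u) (w := x)
        simp only [Fin.val_zero]
        omega
    · obtain ⟨j, hjv, hjr, hjd⟩ := hgood ⟨x, hxS⟩ hRv
      refine ⟨j.succ, hconn.preconnected _ _, ?_⟩
      have hlow := psi_lower_same hconn hSiff' hAiff' hvI huI hdisj' hjv hRv hjr
      have hxx : ((⟨x, hxS⟩ : S) : V) = x := rfl
      rw [hxx] at hlow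
      simp only [Fin.cases_succ]
      have hjv' : (j.succ : ℕ) = (j : ℕ) + 1 := rfl
      have hjp := j.isLt
      rw [hjv']
      omega
  · obtain ⟨φ, hφ1, hφd, hφM⟩ := hM x hxS
    by_cases hnear : d - φ + M ≤ ε
    · -- covered by the deep v-side source
      have hεpos : 1 ≤ ε := by omega
      have hEne : E.Nonempty := by
        by_contra h
        rw [Set.not_nonempty_iff_eq_empty] at h
        rw [hε, h, csSup_empty] at hεpos
        simp at hεpos
      have hεE : ε ∈ E := Nat.sSup_mem hEne hbddE
      obtain ⟨j, hjside, hjdeep⟩ := hEbound ε hεE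
      refine ⟨j.succ, hconn.preconnected _ _, ?_⟩
      simp only [Fin.cases_succ]
      have htri1 := hconn.dist_triangle (u := (σ j).1) (v := v) (w := x)
      have htri2 := hconn.dist_triangle (u := v) (v := P.getVert φ) (w := x)
      have hvφ : T.dist v (P.getVert φ) ≤ d - φ := by
        rw [SimpleGraph.dist_comm]; exact hcv φ (by omega)
      have hσv : T.dist (σ j).1 v = T.dist v (σ j).1 := SimpleGraph.dist_comm
      have hqq : T.dist (P.getVert φ) x = T.dist x (P.getVert φ) := SimpleGraph.dist_comm
      have hjv' : (j.succ : ℕ) = (j : ℕ) + 1 := rfl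
      have hjp := j.isLt
      rw [hjv']
      omega
    · -- covered by the centre c
      refine ⟨0, hconn.preconnected _ _, ?_⟩
      simp only [Fin.cases_zero, Fin.val_zero]
      have htri := hconn.dist_triangle (u := c) (v := P.getVert φ) (w := x)
      have hqq : T.dist (P.getVert φ) x = T.dist x (P.getVert φ) := SimpleGraph.dist_comm
      rcases le_total φ a with hle | hle
      · have hca : T.dist c (P.getVert φ) ≤ a - φ := by
          rw [SimpleGraph.dist_comm]; exact hPdist φ a hle
        omega
      · have hca : T.dist c (P.getVert φ) ≤ φ - a := hPdist a φ hle
        rcases ha4 with h4 | h4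
        · omega
        · rcases hg5 with h5 | h5 <;> omega
end C

section D
variable {V : Type*} {T : SimpleGraph V} {I S : Set V}

lemma reachable_deleteVerts_of_walk {a b : V} (W : T.Walk a b)
    (h : ∀ w ∈ W.support, w ∉ I) : (deleteVerts T I).Reachable a b := by
  induction W with
  | nil => exact Reachable.refl _
  | @cons x y z hadj W ih =>
    have hx : x ∉ I := h x (by simp [Walk.support_cons])
    have hy : y ∉ I := h y (by simp [Walk.support_cons, W.start_mem_support])
    have hrest : ∀ w ∈ W.support, w ∉ I := fun w hw => h w (by simp [Walk.support_cons, hw])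
    exact ((deleteVerts_adj_mk hadj hx hy).reachable).trans (ih hrest)

lemma dist_le_of_hom {T' : SimpleGraph S} (f : T' →g T) {A B : S}
    (hr : T'.Reachable A B) : T.dist (f A) (f B) ≤ T'.dist A B := by
  obtain ⟨W, hW⟩ := hr.exists_walk_length_eq_dist
  calc T.dist (f A) (f B) ≤ (W.map f).length := T.dist_le _
  _ = W.length := by rw [Walk.length_map]
  _ = T'.dist A B := hW

lemma dist_le_subtype {T' : SimpleGraph S}
    (hhom : ∀ a b : S, T'.Adj a b → T.Adj a.1 b.1) {A B : S}
    (hr : T'.Reachable A B) : T.dist A.1 B.1 ≤ T'.dist A B :=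
  dist_le_of_hom (f := ⟨Subtype.val, fun {a b} h => hhom a b h⟩) hr

/-- `T'` is connected -/
lemma T'_connected {u v : V} {T' : SimpleGraph S}
    (hconn : T.Connected) (hacyc : T.IsAcyclic)
    (hSiff : ∀ x, x ∈ S ↔ ((deleteVerts T I).Reachable u x ∨ (deleteVerts T I).Reachable v x))
    (hAiff : ∀ a b : S, T'.Adj a b ↔
      (a ≠ b ∧ (T.Adj a.1 b.1 ∨ (a.1 = u ∧ b.1 = v) ∨ (a.1 = v ∧ b.1 = u)))) :
    T'.Connected := by
  have huS : u ∈ S := (hSiff u).2 (Or.inl (Reachable.refl u))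
  have hvS : v ∈ S := (hSiff v).2 (Or.inr (Reachable.refl v))
  have hSiff' : ∀ x, x ∈ S ↔
      ((deleteVerts T I).Reachable v x ∨ (deleteVerts T I).Reachable u x) :=
    fun x => (hSiff x).trans or_comm
  have hAiff' : ∀ a b : S, T'.Adj a b ↔
      (a ≠ b ∧ (T.Adj a.1 b.1 ∨ (a.1 = v ∧ b.1 = u) ∨ (a.1 = u ∧ b.1 = v))) := by
    intro a b; rw [hAiff]; tauto
  have hreach : ∀ A : S, T'.Reachable ⟨u, huS⟩ A := by
    intro A
    rcases (hSiff A.1).1 A.2 with h | h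
    · exact ((key1 hconn hacyc hSiff hAiff h huS A.2).1.trans (by rw [Subtype.eta]))
    · by_cases huv : u = v
      · subst huv
        exact ((key1 hconn hacyc hSiff hAiff h huS A.2).1.trans (by rw [Subtype.eta]))
      · have hbridge : T'.Adj ⟨u, huS⟩ ⟨v, hvS⟩ := by
          rw [hAiff]
          exact ⟨fun hh => huv (congrArg Subtype.val hh), Or.inr (Or.inl ⟨rfl, rfl⟩)⟩
        have := (key1 (T' := T') hconn hacyc hSiff' hAiff' h hvS A.2).1
        exact (hbridge.reachable).trans (this.trans (by rw [Subtype.eta]))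
  haveI : Nonempty S := ⟨⟨u, huS⟩⟩
  exact ⟨fun A B => (hreach A).symm.trans (hreach B)⟩

/-- if `T` is burnable then `T'` is burnable -/
lemma T'_burnable {u v : V} {T' : SimpleGraph S}
    (hconn : T.Connected) (hacyc : T.IsAcyclic)
    (hSiff : ∀ x, x ∈ S ↔ ((deleteVerts T I).Reachable u x ∨ (deleteVerts T I).Reachable v x))
    (hAiff : ∀ a b : S, T'.Adj a b ↔
      (a ≠ b ∧ (T.Adj a.1 b.1 ∨ (a.1 = u ∧ b.1 = v) ∨ (a.1 = v ∧ b.1 = u))))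
    (B₀ : ℕ) (hub : ∀ z : V, T.dist u z ≤ B₀) :
    ∃ K, Burnable T' K := by
  have huS : u ∈ S := (hSiff u).2 (Or.inl (Reachable.refl u))
  have hvS : v ∈ S := (hSiff v).2 (Or.inr (Reachable.refl v))
  have hSiff' : ∀ x, x ∈ S ↔
      ((deleteVerts T I).Reachable v x ∨ (deleteVerts T I).Reachable u x) :=
    fun x => (hSiff x).trans or_comm
  have hAiff' : ∀ a b : S, T'.Adj a b ↔
      (a ≠ b ∧ (T.Adj a.1 b.1 ∨ (a.1 = v ∧ b.1 = u) ∨ (a.1 = u ∧ b.1 = v))) := by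
    intro a b; rw [hAiff]; tauto
  have hTconn : T'.Connected := T'_connected hconn hacyc hSiff hAiff
  set K := T.dist v u + B₀ + B₀ + 2 with hK
  refine ⟨K, fun _ => ⟨u, huS⟩, fun x => ?_⟩
  have h0 : (0 : ℕ) < K := by omega
  refine ⟨⟨0, h0⟩, (hTconn.preconnected _ _), ?_⟩
  have hdx : T'.dist ⟨u, huS⟩ x ≤ K - 1 := by
    rcases (hSiff x.1).1 x.2 with h | h
    · have := (key1 (T' := T') hconn hacyc hSiff hAiff h huS x.2).2
      have h2 := hub x.1
      have h3 : T'.dist ⟨u, huS⟩ ⟨x.1, x.2⟩ = T'.dist ⟨u, huS⟩ x := by rw [Subtype.eta]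
      omega
    · by_cases huv : u = v
      · subst huv
        have := (key1 (T' := T') hconn hacyc hSiff hAiff h huS x.2).2
        have h2 := hub x.1
        have h3 : T'.dist ⟨u, huS⟩ ⟨x.1, x.2⟩ = T'.dist ⟨u, huS⟩ x := by rw [Subtype.eta]
        omega
      · have hkey := (key1 (T' := T') hconn hacyc hSiff' hAiff' h hvS x.2).2
        have hbridge : T'.Adj ⟨u, huS⟩ ⟨v, hvS⟩ := by
          rw [hAiff]
          exact ⟨fun hh => huv (congrArg Subtype.val hh), Or.inr (Or.inl ⟨rfl, rfl⟩)⟩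
        have htri := hTconn.dist_triangle (u := ⟨u, huS⟩) (v := ⟨v, hvS⟩) (w := x)
        have hb1 : T'.dist ⟨u, huS⟩ ⟨v, hvS⟩ ≤ 1 := by
          have := T'.dist_le (Walk.cons hbridge Walk.nil)
          simpa using this
        have h2 : T.dist v x.1 ≤ T.dist v u + B₀ := by
          have := hconn.dist_triangle (u := v) (v := u) (w := x.1)
          have := hub x.1
          omega
        have h3 : T'.dist ⟨v, hvS⟩ ⟨x.1, x.2⟩ = T'.dist ⟨v, hvS⟩ x := by rw [Subtype.eta]
        omega
  simpa using hdx
end D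

section E
variable {V : Type*} {T : SimpleGraph V} {I S : Set V}

/-- at least one of the two sides is covered entirely by same-side sources -/
lemma dichotomy {u v : V} {T' : SimpleGraph S}
    (hconn : T.Connected) (hacyc : T.IsAcyclic)
    (hSiff : ∀ x, x ∈ S ↔ ((deleteVerts T I).Reachable u x ∨ (deleteVerts T I).Reachable v x))
    (hAiff : ∀ a b : S, T'.Adj a b ↔
      (a ≠ b ∧ (T.Adj a.1 b.1 ∨ (a.1 = u ∧ b.1 = v) ∨ (a.1 = v ∧ b.1 = u))))
    (huI : u ∉ I) (hvI : v ∉ I)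
    (hdisj : ∀ z, (deleteVerts T I).Reachable u z → (deleteVerts T I).Reachable v z → False)
    (p : ℕ) (σ : Fin p → S)
    (hσ : ∀ x : S, ∃ j : Fin p, T'.Reachable (σ j) x ∧ T'.dist (σ j) x ≤ p - 1 - (j:ℕ)) :
    (∀ x : S, (deleteVerts T I).Reachable v x.1 →
       ∃ j : Fin p, (deleteVerts T I).Reachable v (σ j).1 ∧ T'.Reachable (σ j) x ∧
         T'.dist (σ j) x ≤ p - 1 - (j:ℕ)) ∨
    (∀ x : S, (deleteVerts T I).Reachable u x.1 →
       ∃ j : Fin p, (deleteVerts T I).Reachable u (σ j).1 ∧ T'.Reachable (σ j) x ∧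
         T'.dist (σ j) x ≤ p - 1 - (j:ℕ)) := by
  have huS : u ∈ S := (hSiff u).2 (Or.inl (Reachable.refl u))
  have hvS : v ∈ S := (hSiff v).2 (Or.inr (Reachable.refl v))
  have hSiff' : ∀ x, x ∈ S ↔
      ((deleteVerts T I).Reachable v x ∨ (deleteVerts T I).Reachable u x) :=
    fun x => (hSiff x).trans or_comm
  have hAiff' : ∀ a b : S, T'.Adj a b ↔
      (a ≠ b ∧ (T.Adj a.1 b.1 ∨ (a.1 = v ∧ b.1 = u) ∨ (a.1 = u ∧ b.1 = v))) := by
    intro a b; rw [hAiff]; tauto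
  have hdisj' : ∀ z, (deleteVerts T I).Reachable v z →
      (deleteVerts T I).Reachable u z → False := fun z h1 h2 => hdisj z h2 h1
  have hTconn : T'.Connected := T'_connected hconn hacyc hSiff hAiff
  by_contra hcontra
  push_neg at hcontra
  obtain ⟨h2, h1⟩ := hcontra
  obtain ⟨x₂, hx₂v, hx₂⟩ := h2
  obtain ⟨x₁, hx₁u, hx₁⟩ := h1
  -- the source covering x₂ is on the u-side
  obtain ⟨j₂, hj₂r, hj₂d⟩ := hσ x₂
  have hj₂u : (deleteVerts T I).Reachable u (σ j₂).1 := by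
    rcases (hSiff (σ j₂).1).1 (σ j₂).2 with h | h
    · exact h
    · exact absurd hj₂d (Nat.not_le_of_lt (hx₂ j₂ h hj₂r))
  obtain ⟨j₁, hj₁r, hj₁d⟩ := hσ x₁
  have hj₁v : (deleteVerts T I).Reachable v (σ j₁).1 := by
    rcases (hSiff (σ j₁).1).1 (σ j₁).2 with h | h
    · exact absurd hj₁d (Nat.not_le_of_lt (hx₁ j₁ h hj₁r))
    · exact h
  -- lower bounds from crossing
  have hcross2 : T.dist (σ j₂).1 u + 1 + T.dist v x₂.1 ≤ T'.dist (σ j₂) x₂ :=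
    psi_lower_cross hconn hSiff hAiff huI hvI hdisj hj₂u hx₂v hj₂r
  have hcross1 : T.dist (σ j₁).1 v + 1 + T.dist u x₁.1 ≤ T'.dist (σ j₁) x₁ :=
    psi_lower_cross hconn hSiff' hAiff' hvI huI hdisj' hj₁v hx₁u hj₁r
  -- the u-side source does not cover x₁
  have hnc1 : ¬ T'.dist (σ j₂) x₁ ≤ p - 1 - (j₂:ℕ) :=
    Nat.not_le_of_lt (hx₁ j₂ hj₂u (hTconn.preconnected _ _))
  have hnc2 : ¬ T'.dist (σ j₁) x₂ ≤ p - 1 - (j₁:ℕ) :=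
    Nat.not_le_of_lt (hx₂ j₁ hj₁v (hTconn.preconnected _ _))
  -- upper bounds through u (resp. v)
  have hup1 : T'.dist (σ j₂) x₁ ≤ T.dist (σ j₂).1 u + T.dist u x₁.1 := by
    have htri := hTconn.dist_triangle (u := σ j₂) (v := ⟨u, huS⟩) (w := x₁)
    have k1 : T'.dist ⟨u, huS⟩ ⟨(σ j₂).1, (σ j₂).2⟩ ≤ T.dist u (σ j₂).1 :=
      (key1 hconn hacyc hSiff hAiff hj₂u huS (σ j₂).2).2
    have k2 : T'.dist ⟨u, huS⟩ ⟨x₁.1, x₁.2⟩ ≤ T.dist u x₁.1 :=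
      (key1 hconn hacyc hSiff hAiff hx₁u huS x₁.2).2
    rw [Subtype.eta] at k1 k2
    have e1 : T'.dist (σ j₂) ⟨u, huS⟩ = T'.dist ⟨u, huS⟩ (σ j₂) := SimpleGraph.dist_comm
    have e2 : T.dist (σ j₂).1 u = T.dist u (σ j₂).1 := SimpleGraph.dist_comm
    omega
  have hup2 : T'.dist (σ j₁) x₂ ≤ T.dist (σ j₁).1 v + T.dist v x₂.1 := by
    have htri := hTconn.dist_triangle (u := σ j₁) (v := ⟨v, hvS⟩) (w := x₂)
    have k1 : T'.dist ⟨v, hvS⟩ ⟨(σ j₁).1, (σ j₁).2⟩ ≤ T.dist v (σ j₁).1 :=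
      (key1 hconn hacyc hSiff' hAiff' hj₁v hvS (σ j₁).2).2
    have k2 : T'.dist ⟨v, hvS⟩ ⟨x₂.1, x₂.2⟩ ≤ T.dist v x₂.1 :=
      (key1 hconn hacyc hSiff' hAiff' hx₂v hvS x₂.2).2
    rw [Subtype.eta] at k1 k2
    have e1 : T'.dist (σ j₁) ⟨v, hvS⟩ = T'.dist ⟨v, hvS⟩ (σ j₁) := SimpleGraph.dist_comm
    have e2 : T.dist (σ j₁).1 v = T.dist v (σ j₁).1 := SimpleGraph.dist_comm
    omega
  omega
end E

section F
variable {V : Type*} {T : SimpleGraph V} {I S : Set V}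

lemma hAiff_of {u v : V} {T' : SimpleGraph S}
    (hT' : T' = SimpleGraph.fromRel
      (fun (a b : S) => T.Adj a.1 b.1 ∨ (a.1 = u ∧ b.1 = v ∧ u ≠ v))) :
    ∀ a b : S, T'.Adj a b ↔
      (a ≠ b ∧ (T.Adj a.1 b.1 ∨ (a.1 = u ∧ b.1 = v) ∨ (a.1 = v ∧ b.1 = u))) := by
  intro a b
  rw [hT', fromRel_adj]
  constructor
  · rintro ⟨hab, (h | ⟨h1, h2, _⟩) | (h | ⟨h1, h2, _⟩)⟩
    · exact ⟨hab, Or.inl h⟩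
    · exact ⟨hab, Or.inr (Or.inl ⟨h1, h2⟩)⟩
    · exact ⟨hab, Or.inl h.symm⟩
    · exact ⟨hab, Or.inr (Or.inr ⟨h2, h1⟩)⟩
  · rintro ⟨hab, h | ⟨h1, h2⟩ | ⟨h1, h2⟩⟩
    · exact ⟨hab, Or.inl (Or.inl h)⟩
    · refine ⟨hab, Or.inl (Or.inr ⟨h1, h2, fun huv => hab ?_⟩)⟩
      apply Subtype.ext; rw [h1, h2, huv]
    · refine ⟨hab, Or.inr (Or.inr ⟨h2, h1, fun huv => hab ?_⟩)⟩
      apply Subtype.ext; rw [h1, h2, huv]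

lemma sides_disjoint (hconn : T.Connected) (hacyc : T.IsAcyclic)
    {u v : V} (P : T.Walk u v) (hP : P.IsPath) (hd : 2 ≤ P.length)
    (hI : I = {x | x ∈ P.support ∧ x ≠ u ∧ x ≠ v}) :
    ∀ z, (deleteVerts T I).Reachable u z → (deleteVerts T I).Reachable v z → False := by
  classical
  intro z h1 h2
  obtain ⟨W₁⟩ := h1
  obtain ⟨W₂⟩ := h2
  set W : (deleteVerts T I).Walk u v := W₁.append W₂.reverse with hW
  have huI : u ∉ I := by rw [hI]; simp
  have hsup : ∀ w ∈ W.support, w ∉ I := walk_support_not_mem W huI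
  have hQ : (W.bypass.mapLe (deleteVerts_le (I := I))).IsPath := W.bypass_isPath.mapLe _
  have hPQ : P = W.bypass.mapLe (deleteVerts_le (I := I)) :=
    congrArg Subtype.val (hacyc.path_unique ⟨P, hP⟩ ⟨_, hQ⟩)
  have hx1mem : P.getVert 1 ∈ P.support :=
    Walk.mem_support_iff_exists_getVert.mpr ⟨1, rfl, by omega⟩
  have hx1I : P.getVert 1 ∈ I := by
    rw [hI]
    exact ⟨hx1mem, (getVert_one_ne P hP hd).1, (getVert_one_ne P hP hd).2⟩
  have hx1mem' : P.getVert 1 ∈ (W.bypass.mapLe (deleteVerts_le (I := I))).support := by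
    rw [← hPQ]; exact hx1mem
  have hsupeq : (W.bypass.mapLe (deleteVerts_le (I := I))).support = W.bypass.support := by
    rw [Walk.mapLe, Walk.support_map]
    have : ⇑(Hom.ofLE (deleteVerts_le (T := T) (I := I))) = fun (x : V) => x := rfl
    rw [this, List.map_id']
  rw [hsupeq] at hx1mem'
  exact hsup _ (W.support_bypass_subset hx1mem') hx1I

lemma hM_of (hconn : T.Connected) {u v : V} (P : T.Walk u v)
    (hI : I = {x | x ∈ P.support ∧ x ≠ u ∧ x ≠ v})
    (hSiff : ∀ x, x ∈ S ↔ ((deleteVerts T I).Reachable u x ∨ (deleteVerts T I).Reachable v x))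
    (M : ℕ) (hatt : ∀ x ∉ S, ∃ y ∈ P.support, T.dist x y ≤ M) :
    ∀ x ∉ S, ∃ φ : ℕ, 1 ≤ φ ∧ φ + 1 ≤ P.length ∧ T.dist x (P.getVert φ) ≤ M := by
  classical
  intro x hxS
  obtain ⟨y, hy, hdxy⟩ := hatt x hxS
  obtain ⟨φ₀, hφ₀, hφ₀le⟩ := Walk.mem_support_iff_exists_getVert.mp hy
  by_cases h1 : 1 ≤ φ₀ ∧ φ₀ + 1 ≤ P.length
  · exact ⟨φ₀, h1.1, h1.2, hφ₀ ▸ hdxy⟩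
  -- y is an endpoint
  have hyuv : y = u ∨ y = v := by
    rcases Nat.eq_zero_or_pos φ₀ with h0 | h0
    · left; rw [← hφ₀, h0, P.getVert_zero]
    · right
      have : φ₀ = P.length := by omega
      rw [← hφ₀, this, P.getVert_length]
  -- a shortest walk from x to y must contain an internal vertex of P
  have hreach : T.Reachable x y := hconn.preconnected x y
  obtain ⟨W, hWlen⟩ := hreach.exists_walk_length_eq_dist
  have hex : ∃ w ∈ W.support, w ∈ I := by
    by_contra hno
    push_neg at hno
    have hr := reachable_deleteVerts_of_walk W hno
    apply hxS
    rcases hyuv with rfl | rfl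
    · exact (hSiff x).2 (Or.inl hr.symm)
    · exact (hSiff x).2 (Or.inr hr.symm)
  obtain ⟨w, hwsup, hwI⟩ := hex
  have hwP : w ∈ P.support ∧ w ≠ u ∧ w ≠ v := by rw [hI] at hwI; exact hwI
  obtain ⟨φ, hφ, hφle⟩ := Walk.mem_support_iff_exists_getVert.mp hwP.1
  have hφ1 : 1 ≤ φ := by
    rcases Nat.eq_zero_or_pos φ with h0 | h0
    · exfalso; apply hwP.2.1; rw [← hφ, h0, P.getVert_zero]
    · exact h0
  have hφ2 : φ + 1 ≤ P.length := by
    rcases Nat.lt_or_ge φ P.length with h0 | h0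
    · omega
    · exfalso; apply hwP.2.2; rw [← hφ, P.getVert_of_length_le h0]
  refine ⟨φ, hφ1, hφ2, ?_⟩
  rw [hφ]
  have hdxw : T.dist x w ≤ W.length := by
    have htake := T.dist_le (W.takeUntil w hwsup)
    have hlen := congrArg Walk.length (W.take_spec hwsup)
    rw [Walk.length_append] at hlen
    omega
  calc T.dist x w ≤ W.length := hdxw
  _ = T.dist x y := hWlen
  _ ≤ M := hdxy
end F


theorem burning_induction {V : Type*} (T : SimpleGraph V) (hT : T.IsTree)
    (u v : V) (P : T.Walk u v) (hP : P.IsPath)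
    -- `I` is the set of internal vertices of the path `P`
    (I : Set V) (hI : I = {x | x ∈ P.support ∧ x ≠ u ∧ x ≠ v})
    -- `S = V(T₁) ∪ V(T₂)`, where `T₁` (resp. `T₂`) is the connected component of
    -- `T ∖ I` containing `u` (resp. `v`)
    (S : Set V)
    (hS : S = {x | (deleteVerts T I).Reachable u x ∨ (deleteVerts T I).Reachable v x})
    -- `T'` is the disjoint union of `T₁` and `T₂` together with the edge `uv`
    (T' : SimpleGraph S)
    (hT' : T' = SimpleGraph.fromRel
      (fun (a b : S) => T.Adj a.1 b.1 ∨ (a.1 = u ∧ b.1 = v ∧ u ≠ v)))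
    (p : ℕ) (hp : burningNumber T' = p)
    (hcond : T.dist u v +
        2 * sSup {m : ℕ | ∃ x ∉ S, m = sInf {d : ℕ | ∃ y ∈ P.support, d = T.dist x y}}
      ≤ 2 * p + 2) :
    burningNumber T ≤ p + 1 := by
  classical
  obtain ⟨hconn, hacyc⟩ := hT
  by_cases hbt : ∃ k, Burnable T k
  case neg =>
    have hempty : {k | Burnable T k} = ∅ :=
      Set.eq_empty_iff_forall_notMem.mpr (fun k hk => hbt ⟨k, hk⟩)
    rw [burningNumber, hempty, Nat.sInf_empty]
    omega
  obtain ⟨k, hk⟩ := hbt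
  obtain ⟨w, hw⟩ := hk
  set D : ℕ := Finset.univ.sup (fun i : Fin k => T.dist u (w i)) with hD
  have hub : ∀ z : V, T.dist u z ≤ D + k := by
    intro z
    obtain ⟨i, hir, hid⟩ := hw z
    have h1 : T.dist u (w i) ≤ D := by
      rw [hD]; exact Finset.le_sup (f := fun i : Fin k => T.dist u (w i)) (Finset.mem_univ i)
    have h2 := hconn.dist_triangle (u := u) (v := w i) (w := z)
    omega
  have hSiff : ∀ x, x ∈ S ↔
      ((deleteVerts T I).Reachable u x ∨ (deleteVerts T I).Reachable v x) := by
    intro x; rw [hS]; exact Iff.rfl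
  have hAiff := hAiff_of hT'
  have huI : u ∉ I := by rw [hI]; simp
  have hvI : v ∉ I := by rw [hI]; simp
  obtain ⟨K, hK⟩ := T'_burnable hconn hacyc hSiff hAiff (D + k) hub
  have hne' : {k | Burnable T' k}.Nonempty := ⟨K, hK⟩
  have hb'' := Nat.sInf_mem hne'
  rw [Set.mem_setOf_eq] at hb''
  have hb' : Burnable T' p := by
    rw [← hp]; exact hb''
  obtain ⟨σ, hσ⟩ := hb'
  set M := sSup {m : ℕ | ∃ x ∉ S, m = sInf {d : ℕ | ∃ y ∈ P.support, d = T.dist x y}}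
    with hMdef
  have hatt : ∀ x ∉ S, ∃ y ∈ P.support, T.dist x y ≤ M := by
    intro x hxS
    have hDxne : {d : ℕ | ∃ y ∈ P.support, d = T.dist x y}.Nonempty :=
      ⟨T.dist x u, u, P.start_mem_support, rfl⟩
    obtain ⟨y, hy, hval⟩ := Nat.sInf_mem hDxne
    have hbdd : BddAbove {m : ℕ | ∃ x ∉ S, m = sInf {d : ℕ | ∃ y ∈ P.support, d = T.dist x y}} := by
      refine ⟨D + k, ?_⟩
      rintro m ⟨x', hx'S, rfl⟩
      have h1 : sInf {d : ℕ | ∃ y ∈ P.support, d = T.dist x' y} ≤ T.dist x' u :=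
        Nat.sInf_le ⟨u, P.start_mem_support, rfl⟩
      have h2 := hub x'
      have h3 : T.dist u x' = T.dist x' u := SimpleGraph.dist_comm
      omega
    have hle : sInf {d : ℕ | ∃ y ∈ P.support, d = T.dist x y} ≤ M :=
      le_csSup hbdd ⟨x, hxS, rfl⟩
    exact ⟨y, hy, by omega⟩
  have hMle := hM_of hconn P hI hSiff M hatt
  have hPlen : P.length = T.dist u v := path_length_eq_dist hconn hacyc P hP
  have hcond2 : P.length + 2*M ≤ 2*p + 2 := by rw [hPlen]; exact hcond
  by_cases hd2 : 2 ≤ P.length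
  · have hdisj := sides_disjoint hconn hacyc P hP hd2 hI
    rcases dichotomy hconn hacyc hSiff hAiff huI hvI hdisj p σ hσ with hgood | hgood
    · exact burningNumber_le_of_burnable
        (main_construct T hconn hacyc u v P hP hd2 I S hSiff huI hvI hdisj T' hAiff
          p σ hσ hgood M hMle hcond2)
    · have hSiff' : ∀ x, x ∈ S ↔
          ((deleteVerts T I).Reachable v x ∨ (deleteVerts T I).Reachable u x) :=
        fun x => (hSiff x).trans or_comm
      have hAiff' : ∀ a b : S, T'.Adj a b ↔
          (a ≠ b ∧ (T.Adj a.1 b.1 ∨ (a.1 = v ∧ b.1 = u) ∨ (a.1 = u ∧ b.1 = v))) := by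
        intro a b; rw [hAiff]; tauto
      have hdisj' : ∀ z, (deleteVerts T I).Reachable v z →
          (deleteVerts T I).Reachable u z → False := fun z h1 h2 => hdisj z h2 h1
      have hMle' : ∀ x ∉ S, ∃ φ : ℕ, 1 ≤ φ ∧ φ + 1 ≤ P.reverse.length ∧
          T.dist x (P.reverse.getVert φ) ≤ M := by
        intro x hx
        obtain ⟨φ, h1, h2, h3⟩ := hMle x hx
        refine ⟨P.length - φ, by omega, ?_, ?_⟩
        · rw [Walk.length_reverse]; omega
        · rw [Walk.getVert_reverse, Nat.sub_sub_self (by omega)]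
          exact h3
      exact burningNumber_le_of_burnable
        (main_construct T hconn hacyc v u P.reverse hP.reverse
          (by rw [Walk.length_reverse]; exact hd2) I S hSiff' hvI huI hdisj' T' hAiff'
          p σ hσ hgood M hMle'
          (by rw [Walk.length_reverse]; exact hcond2))
  · push_neg at hd2
    have hIempty : ∀ z, z ∉ I := by
      intro z hz
      rw [hI] at hz
      obtain ⟨hzsup, hzu, hzv⟩ := hz
      obtain ⟨n, hn, hnle⟩ := Walk.mem_support_iff_exists_getVert.mp hzsup
      have hn01 : n = 0 ∨ n = 1 := by omega
      rcases hn01 with rfl | rfl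
      · exact hzu (by rw [← hn, P.getVert_zero])
      · have hl1 : P.length = 1 := by omega
        exact hzv (by rw [← hn, ← hl1, P.getVert_length])
    have hSuniv : ∀ x, x ∈ S := by
      intro x
      obtain ⟨W⟩ := hconn.preconnected u x
      exact (hSiff x).2 (Or.inl (reachable_deleteVerts_of_walk W (fun w _ => hIempty w)))
    have hhom : ∀ a b : S, T'.Adj a b → T.Adj a.1 b.1 := by
      intro a b hab
      rcases (hAiff a b).1 hab with ⟨hne', h | ⟨h1, h2⟩ | ⟨h1, h2⟩⟩
      · exact h
      · have huv : u ≠ v := fun h => hne' (Subtype.ext (by rw [h1, h2, h]))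
        have hl0 : P.length ≠ 0 := fun h0 => huv (Walk.eq_of_length_eq_zero h0)
        have hadj : T.Adj u v := Walk.adj_of_length_eq_one (p := P) (by omega)
        rw [h1, h2]; exact hadj
      · have huv : u ≠ v := fun h => hne' (Subtype.ext (by rw [h1, h2, h.symm]))
        have hl0 : P.length ≠ 0 := fun h0 => huv (Walk.eq_of_length_eq_zero h0)
        have hadj : T.Adj u v := Walk.adj_of_length_eq_one (p := P) (by omega)
        rw [h1, h2]; exact hadj.symm
    refine burningNumber_le_of_burnable
      ⟨Fin.cases u (fun j => (σ j).1), fun x => ?_⟩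
    obtain ⟨j, hjr, hjd⟩ := hσ ⟨x, hSuniv x⟩
    refine ⟨j.succ, hconn.preconnected _ _, ?_⟩
    have hle := dist_le_subtype hhom hjr
    have hxx : ((⟨x, hSuniv x⟩ : S) : V) = x := rfl
    rw [hxx] at hle
    simp only [Fin.cases_succ]
    have hjv : (j.succ : ℕ) = (j : ℕ) + 1 := rfl
    have hjp := j.isLt
    rw [hjv]
    omega
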